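/- For all f, g ∈ 𝒮(R^d), the symplectic Fourier transform of the Wigner distribution of f and g equals the Wigner distribution of the reflection of f and g: F_σ(W_{f,g}) = W_{f̌,g}, where f̌(x) = f(−x). -/

import Mathlib

open MeasureTheory Complex
open scoped Real BigOperators Nat ENNReal

noncomputable section

/-- `ℝ^d` as functions `Fin d → ℝ`. -/
abbrev RR (d : ℕ) := Fin d → ℝ

/-- `ℝ^{2d} = ℝ^d × ℝ^d`. -/
abbrev RR2 (d : ℕ) := (Fin d → ℝ) × (Fin d → ℝ)

/-- The symplectic form `σ(X,Y) = ⟨y,ξ⟩ − ⟨x,η⟩` for `X=(x,ξ)`, `Y=(y,η)`. -/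
def sform (d : ℕ) (X Y : RR2 d) : ℝ :=
  (∑ j, Y.1 j * X.2 j) - (∑ j, X.1 j * Y.2 j)

/-- Partial derivative `∂_{x_j}` on functions of `(x,ξ) ∈ ℝ^{2d}`. -/
def pd1 (d : ℕ) (j : Fin d) (f : RR2 d → ℂ) : RR2 d → ℂ :=
  fun p => fderiv ℝ f p (Pi.single j 1, 0)

/-- Partial derivative `∂_{ξ_j}` on functions of `(x,ξ) ∈ ℝ^{2d}`. -/
def pd2 (d : ℕ) (j : Fin d) (f : RR2 d → ℂ) : RR2 d → ℂ :=
  fun p => fderiv ℝ f p (0, Pi.single j 1)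

/-- `H_σ a = (|X|² − (1/4)Δ_X) a + ⟨ξ, D_x a⟩ − ⟨x, D_ξ a⟩`, where `D = −i∇`. -/
def Hsig (d : ℕ) (f : RR2 d → ℂ) : RR2 d → ℂ := fun p =>
  ((∑ j, ((p.1 j) ^ 2 + (p.2 j) ^ 2) : ℝ) : ℂ) * f p
    - (1/4 : ℂ) * ∑ j, (pd1 d j (pd1 d j f) p + pd2 d j (pd2 d j f) p)
    + ∑ j, ((p.2 j : ℂ) * (-Complex.I * pd1 d j f p))
    - ∑ j, ((p.1 j : ℂ) * (-Complex.I * pd2 d j f p))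

/-- `H̄_σ a = (|X|² − (1/4)Δ_X) a − ⟨ξ, D_x a⟩ + ⟨x, D_ξ a⟩`, where `D = −i∇`. -/
def Hbar (d : ℕ) (f : RR2 d → ℂ) : RR2 d → ℂ := fun p =>
  ((∑ j, ((p.1 j) ^ 2 + (p.2 j) ^ 2) : ℝ) : ℂ) * f p
    - (1/4 : ℂ) * ∑ j, (pd1 d j (pd1 d j f) p + pd2 d j (pd2 d j f) p)
    - ∑ j, ((p.2 j : ℂ) * (-Complex.I * pd1 d j f p))
    + ∑ j, ((p.1 j : ℂ) * (-Complex.I * pd2 d j f p))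

/-- `T_σ = H_σ ∘ H̄_σ`. -/
def Tsig (d : ℕ) (f : RR2 d → ℂ) : RR2 d → ℂ := Hsig d (Hbar d f)

/-- Partial derivative `∂_{x_j}` for real-valued functions on `ℝ^n`. -/
def pdR (n : ℕ) (j : Fin n) (f : (Fin n → ℝ) → ℝ) : (Fin n → ℝ) → ℝ :=
  fun x => fderiv ℝ f x (Pi.single j 1)

/-- Iterated partial derivative `∂^α` on `ℝ^n`. -/
def multiDeriv (n : ℕ) (α : Fin n → ℕ) (f : (Fin n → ℝ) → ℝ) : (Fin n → ℝ) → ℝ :=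
  (List.finRange n).foldr (fun j g => (pdR n j)^[α j] g) f

/-- The Hermite function
`h_α(x) = π^{−n/4} (−1)^{|α|} (2^{|α|} α!)^{−1/2} e^{|x|²/2} ∂^α(e^{−|x|²})`. -/
def hermiteFun (n : ℕ) (α : Fin n → ℕ) (x : Fin n → ℝ) : ℝ :=
  Real.pi ^ (-(n : ℝ)/4) * (-1 : ℝ) ^ (∑ j, α j)
    * (((2 : ℝ) ^ (∑ j, α j) * ((∏ j, (α j).factorial : ℕ) : ℝ)) ^ (-(1:ℝ)/2))
    * Real.exp ((∑ j, (x j) ^ 2) / 2)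
    * multiDeriv n α (fun y => Real.exp (-(∑ j, (y j) ^ 2))) x

/-- The Wigner distribution
`W_{f,g}(x,ξ) = (2π)^{−d/2} ∫ f(x−y/2) conj(g(x+y/2)) e^{i⟨y,ξ⟩} dy`. -/
def wigner (d : ℕ) (f g : RR d → ℂ) (p : RR2 d) : ℂ :=
  (((2 * Real.pi) ^ (-(d : ℝ)/2) : ℝ) : ℂ) *
    ∫ y : RR d,
      f (p.1 - (2:ℝ)⁻¹ • y) * (starRingEnd ℂ) (g (p.1 + (2:ℝ)⁻¹ • y))
        * Complex.exp (Complex.I * ((∑ j, y j * p.2 j : ℝ) : ℂ))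

/-- The Hermite–Wong function `ϱ_α = (−1)^{|α₁|} W_{h_{α₁},h_{α₂}}`. -/
def hermiteWong (d : ℕ) (α : (Fin d → ℕ) × (Fin d → ℕ)) (X : RR2 d) : ℂ :=
  (-1 : ℂ) ^ (∑ j, α.1 j) *
    wigner d (fun x => (hermiteFun d α.1 x : ℂ)) (fun x => (hermiteFun d α.2 x : ℂ)) X

/-- The symplectic Fourier transform `(F_σ a)(X) = π^{−d} ∫ a(Y) e^{2iσ(X,Y)} dY`. -/
def symplFT (d : ℕ) (a : RR2 d → ℂ) (X : RR2 d) : ℂ :=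
  (((Real.pi ^ d : ℝ)⁻¹ : ℝ) : ℂ) *
    ∫ Y : RR2 d, a Y * Complex.exp (2 * Complex.I * ((sform d X Y : ℝ) : ℂ))

/-- The twisted convolution
`(a *_σ b)(X) = (2/π)^{d/2} ∫ a(X−Y) b(Y) e^{2iσ(X,Y)} dY`. -/
def twConv (d : ℕ) (a b : RR2 d → ℂ) (X : RR2 d) : ℂ :=
  ((((2 / Real.pi) ^ ((d : ℝ)/2) : ℝ)) : ℂ) *
    ∫ Y : RR2 d, a (X - Y) * b Y * Complex.exp (2 * Complex.I * ((sform d X Y : ℝ) : ℂ))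

/-- A tempered distribution `a` on `ℝ^{2d}` is positive semi-definite with respect to the
twisted convolution if `∫ (a *_σ ψ)(X) conj(ψ(X)) dX` is real and nonnegative for every
Schwartz `ψ`, where `(a *_σ ψ)(X) = a(Z ↦ (2/π)^{d/2} ψ(X−Z) e^{−2iσ(X,Z)})`.
The Schwartz function `Z ↦ (2/π)^{d/2} ψ(X−Z) e^{−2iσ(X,Z)}` is represented by an arbitrary
witness family `Φ`. -/
def PosSemidefTwisted (d : ℕ) (a : SchwartzMap (RR2 d) ℂ →L[ℂ] ℂ) : Prop :=
  ∀ (ψ : SchwartzMap (RR2 d) ℂ) (Φ : RR2 d → SchwartzMap (RR2 d) ℂ),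
    (∀ X Z, Φ X Z = (((2 / Real.pi) ^ ((d : ℝ)/2) : ℝ) : ℂ) * ψ (X - Z)
        * Complex.exp (-2 * Complex.I * ((sform d X Z : ℝ) : ℂ))) →
    (∫ X : RR2 d, a (Φ X) * (starRingEnd ℂ) (ψ X)).im = 0 ∧
      0 ≤ (∫ X : RR2 d, a (Φ X) * (starRingEnd ℂ) (ψ X)).re

/-- The operator `A`: `(Aa)(x,y) = (2π)^{−d/2} ∫ a((y−x)/2, ξ) e^{−i⟨x+y,ξ⟩} dξ`. -/
def opA (d : ℕ) (a : RR2 d → ℂ) (p : RR2 d) : ℂ :=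
  (((2 * Real.pi) ^ (-(d : ℝ)/2) : ℝ) : ℂ) *
    ∫ ξ : RR d, a ((2:ℝ)⁻¹ • (p.2 - p.1), ξ)
      * Complex.exp (-Complex.I * ((∑ j, (p.1 j + p.2 j) * ξ j : ℝ) : ℂ))

/-- The partial harmonic oscillator `H₁U(x,y) = (|x|² − Δ_x)U(x,y)`. -/
def H1op (d : ℕ) (f : RR2 d → ℂ) : RR2 d → ℂ := fun p =>
  ((∑ j, (p.1 j) ^ 2 : ℝ) : ℂ) * f p - ∑ j, pd1 d j (pd1 d j f) p

/-- The partial harmonic oscillator `H₂U(x,y) = (|y|² − Δ_y)U(x,y)`. -/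
def H2op (d : ℕ) (f : RR2 d → ℂ) : RR2 d → ℂ := fun p =>
  ((∑ j, (p.2 j) ^ 2 : ℝ) : ℂ) * f p - ∑ j, pd2 d j (pd2 d j f) p

/-- Partial derivative `∂_{x_j}` for complex-valued functions on `ℝ^d`. -/
def pdC (d : ℕ) (j : Fin d) (f : RR d → ℂ) : RR d → ℂ :=
  fun x => fderiv ℝ f x (Pi.single j 1)

/-- The harmonic oscillator `H = |x|² − Δ` on `ℝ^d`. -/
def Hop (d : ℕ) (f : RR d → ℂ) : RR d → ℂ := fun x =>
  ((∑ j, (x j) ^ 2 : ℝ) : ℂ) * f x - ∑ j, pdC d j (pdC d j f) x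

/-- The Weyl quantization
`Op^w(a)f(x) = (2π)^{−d} ∬ a((x+y)/2, ξ) f(y) e^{i⟨x−y,ξ⟩} dy dξ`. -/
def weylOp (d : ℕ) (a : RR2 d → ℂ) (f : RR d → ℂ) (x : RR d) : ℂ :=
  ((((2 * Real.pi) ^ d : ℝ)⁻¹ : ℝ) : ℂ) *
    ∫ Y : RR2 d, a ((2:ℝ)⁻¹ • (x + Y.1), Y.2) * f Y.1
      * Complex.exp (Complex.I * ((∑ j, (x j - Y.1 j) * Y.2 j : ℝ) : ℂ))

/-- `Z_{1,j} = (1/2)∂_{z_j} + z̄_j`, where `∂_{z_j} = ∂_{x_j} − i∂_{ξ_j}`, `z̄_j = x_j − iξ_j`. -/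
def Zop1 (d : ℕ) (j : Fin d) (f : RR2 d → ℂ) : RR2 d → ℂ := fun p =>
  (1/2 : ℂ) * (pd1 d j f p - Complex.I * pd2 d j f p)
    + ((p.1 j : ℂ) - Complex.I * (p.2 j : ℂ)) * f p

/-- `Z̃_{1,j} = (1/2)∂_{z̄_j} − z_j`, where `∂_{z̄_j} = ∂_{x_j} + i∂_{ξ_j}`, `z_j = x_j + iξ_j`. -/
def Ztop1 (d : ℕ) (j : Fin d) (f : RR2 d → ℂ) : RR2 d → ℂ := fun p =>
  (1/2 : ℂ) * (pd1 d j f p + Complex.I * pd2 d j f p)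
    - ((p.1 j : ℂ) + Complex.I * (p.2 j : ℂ)) * f p

/-- `Z_{2,j} = (1/2)∂_{z̄_j} + z_j`. -/
def Zop2 (d : ℕ) (j : Fin d) (f : RR2 d → ℂ) : RR2 d → ℂ := fun p =>
  (1/2 : ℂ) * (pd1 d j f p + Complex.I * pd2 d j f p)
    + ((p.1 j : ℂ) + Complex.I * (p.2 j : ℂ)) * f p

/-- `Z̃_{2,j} = (1/2)∂_{z_j} − z̄_j`. -/
def Ztop2 (d : ℕ) (j : Fin d) (f : RR2 d → ℂ) : RR2 d → ℂ := fun p =>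
  (1/2 : ℂ) * (pd1 d j f p - Complex.I * pd2 d j f p)
    - ((p.1 j : ℂ) - Complex.I * (p.2 j : ℂ)) * f p

/-- Partial derivative `∂_{x_j}` for real-valued functions on `ℝ^{2d}`. -/
def pd1R (d : ℕ) (j : Fin d) (f : RR2 d → ℝ) : RR2 d → ℝ :=
  fun p => fderiv ℝ f p (Pi.single j 1, 0)

/-- Partial derivative `∂_{y_j}` for real-valued functions on `ℝ^{2d}`. -/
def pd2R (d : ℕ) (j : Fin d) (f : RR2 d → ℝ) : RR2 d → ℝ :=
  fun p => fderiv ℝ f p (0, Pi.single j 1)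

/-- Iterated partial derivative `∂^α`, `α ∈ ℕ^{2d}`, on `ℝ^{2d}`. -/
def multiDeriv2 (d : ℕ) (α : (Fin d → ℕ) × (Fin d → ℕ)) (f : RR2 d → ℝ) : RR2 d → ℝ :=
  (List.finRange d).foldr (fun j g => (pd1R d j)^[α.1 j] g)
    ((List.finRange d).foldr (fun j g => (pd2R d j)^[α.2 j] g) f)

/-- The Hermite function on `ℝ^{2d}` of order `α ∈ ℕ^{2d}` (with `n = 2d` in the general
formula `h_α = π^{−n/4} (−1)^{|α|} (2^{|α|} α!)^{−1/2} e^{|X|²/2} ∂^α(e^{−|X|²})`). -/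
def hermite2 (d : ℕ) (α : (Fin d → ℕ) × (Fin d → ℕ)) (X : RR2 d) : ℝ :=
  Real.pi ^ (-(2 * d : ℝ)/4) * (-1 : ℝ) ^ ((∑ j, α.1 j) + ∑ j, α.2 j)
    * (((2 : ℝ) ^ ((∑ j, α.1 j) + ∑ j, α.2 j)
        * ((((∏ j, (α.1 j).factorial) * ∏ j, (α.2 j).factorial : ℕ)) : ℝ)) ^ (-(1:ℝ)/2))
    * Real.exp ((∑ j, ((X.1 j) ^ 2 + (X.2 j) ^ 2)) / 2)
    * multiDeriv2 d α (fun Y => Real.exp (-(∑ j, ((Y.1 j) ^ 2 + (Y.2 j) ^ 2)))) X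


section SymplFTAux

open scoped FourierTransform

variable {d : ℕ}

local notation "𝔼" => EuclideanSpace ℝ (Fin d)
local notation "∞∞" => ((⊤ : ℕ∞) : WithTop ℕ∞)

lemma norm_iFD_affine_le (c : ℝ) (y t : 𝔼) {i : ℕ} (hi : 1 ≤ i) :
    ‖iteratedFDeriv ℝ i (fun s : 𝔼 => y + c • s) t‖ ≤ |c| := by
  have hfd : (fderiv ℝ (fun s : 𝔼 => y + c • s)) = fun _ => c • ContinuousLinearMap.id ℝ 𝔼 := by
    funext u
    rw [fderiv_const_add]
    exact (c • ContinuousLinearMap.id ℝ 𝔼).fderiv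
  obtain ⟨k, rfl⟩ : ∃ k, i = k + 1 := ⟨i - 1, (Nat.succ_pred_eq_of_pos hi).symm⟩
  rw [← norm_iteratedFDeriv_fderiv, hfd]
  rcases Nat.eq_zero_or_pos k with rfl | hk
  · rw [norm_iteratedFDeriv_zero]
    calc ‖c • ContinuousLinearMap.id ℝ 𝔼‖ ≤ ‖c‖ * ‖ContinuousLinearMap.id ℝ 𝔼‖ :=
          ContinuousLinearMap.opNorm_smul_le _ _
    _ ≤ |c| * 1 := by
        rw [Real.norm_eq_abs]; gcongr; exact ContinuousLinearMap.norm_id_le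
    _ = |c| := mul_one _
  · rw [iteratedFDeriv_const_of_ne (Nat.pos_iff_ne_zero.mp hk)]
    simp [abs_nonneg]

lemma norm_iFD_comp_affine {f₀ : 𝔼 → ℂ} (hf₀ : ContDiff ℝ ∞∞ f₀) {S : ℝ} {k n : ℕ}
    (hb : ∀ i, i ≤ n → ∀ u : 𝔼, ‖iteratedFDeriv ℝ i f₀ u‖ ≤ S * ((1 + ‖u‖) ^ k)⁻¹)
    {c : ℝ} (hc : |c| ≤ 1) (y : 𝔼) {m : ℕ} (hm : m ≤ n) (t : 𝔼) :
    ‖iteratedFDeriv ℝ m (fun s => f₀ (y + c • s)) t‖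
      ≤ m ! * (S * ((1 + ‖y + c • t‖) ^ k)⁻¹) := by
  have hA : ContDiff ℝ ∞∞ (fun s : 𝔼 => y + c • s) :=
    contDiff_const.add (contDiff_id.const_smul c)
  have h := norm_iteratedFDeriv_comp_le (g := f₀) (f := fun s : 𝔼 => y + c • s)
      (n := m) (N := ∞∞) hf₀ hA (mod_cast le_top) t
      (C := S * ((1 + ‖y + c • t‖) ^ k)⁻¹) (D := 1)
      (fun i hi => hb i (hi.trans hm) _)
      (fun i hi₁ _ => by
        rw [one_pow]
        exact (norm_iFD_affine_le c y t hi₁).trans hc)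
  simpa [Function.comp_def] using h

lemma schwartz_decay_bound (h : SchwartzMap 𝔼 ℂ) (k n : ℕ) :
    ∃ S : ℝ, 0 ≤ S ∧ ∀ i, i ≤ n → ∀ u : 𝔼,
      ‖iteratedFDeriv ℝ i (⇑h) u‖ ≤ S * ((1 + ‖u‖) ^ k)⁻¹ := by
  refine ⟨2 ^ k * (Finset.Iic (k, n)).sup (fun m => SchwartzMap.seminorm ℝ m.1 m.2) h,
    mul_nonneg (by positivity) (apply_nonneg _ _), fun i hi u => ?_⟩
  have h1 : (0:ℝ) < (1 + ‖u‖) ^ k := by positivity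
  rw [← div_eq_mul_inv, le_div_iff₀ h1, mul_comm]
  exact SchwartzMap.one_add_le_sup_seminorm_apply (m := (k,n)) le_rfl hi h u

lemma schwartz_conj_decay_bound (h : SchwartzMap 𝔼 ℂ) (k n : ℕ) :
    ∃ S : ℝ, 0 ≤ S ∧ ∀ i, i ≤ n → ∀ u : 𝔼,
      ‖iteratedFDeriv ℝ i (fun v => (starRingEnd ℂ) (h v)) u‖ ≤ S * ((1 + ‖u‖) ^ k)⁻¹ := by
  obtain ⟨S, hS, hb⟩ := schwartz_decay_bound h k n
  refine ⟨S, hS, fun i hi u => ?_⟩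
  have he : (fun v => (starRingEnd ℂ) (h v)) = ⇑Complex.conjLIE ∘ ⇑h := rfl
  rw [he, LinearIsometryEquiv.norm_iteratedFDeriv_comp_left]
  exact hb i hi u


/-- The Wigner kernel. -/
def Kker (fs gs : SchwartzMap (EuclideanSpace ℝ (Fin d)) ℂ) (y : EuclideanSpace ℝ (Fin d)) :
    EuclideanSpace ℝ (Fin d) → ℂ :=
  fun t => fs (y - (2:ℝ)⁻¹ • t) * (starRingEnd ℂ) (gs (y + (2:ℝ)⁻¹ • t))

lemma contDiff_aff1 (fs : SchwartzMap 𝔼 ℂ) (y : 𝔼) :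
    ContDiff ℝ ∞∞ (fun s : 𝔼 => fs (y - (2:ℝ)⁻¹ • s)) :=
  (fs.smooth ⊤).comp (contDiff_const.sub (contDiff_id.const_smul _))

lemma contDiff_aff2 (gs : SchwartzMap 𝔼 ℂ) (y : 𝔼) :
    ContDiff ℝ ∞∞ (fun s : 𝔼 => (starRingEnd ℂ) (gs (y + (2:ℝ)⁻¹ • s))) :=
  (Complex.conjCLE.toContinuousLinearMap.contDiff).comp
    ((gs.smooth ⊤).comp (contDiff_const.add (contDiff_id.const_smul _)))

lemma contDiff_Kker (fs gs : SchwartzMap 𝔼 ℂ) (y : 𝔼) :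
    ContDiff ℝ ∞∞ (Kker fs gs y) :=
  (contDiff_aff1 fs y).mul (contDiff_aff2 gs y)

lemma peetre_aux (y t : 𝔼) :
    ((1 + ‖y‖) ^ (d + 2) * (1 + ‖t‖) ^ (d + 2) : ℝ)
      ≤ (1 + ‖y - (2:ℝ)⁻¹ • t‖) ^ (2 * d + 4) * (1 + ‖y + (2:ℝ)⁻¹ • t‖) ^ (2 * d + 4) := by
  set a := ‖y - (2:ℝ)⁻¹ • t‖ with ha
  set b := ‖y + (2:ℝ)⁻¹ • t‖ with hb
  have ha0 : 0 ≤ a := norm_nonneg _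
  have hb0 : 0 ≤ b := norm_nonneg _
  have hy : ‖y‖ + ‖y‖ ≤ a + b := by
    have h1 : (y - (2:ℝ)⁻¹ • t) + (y + (2:ℝ)⁻¹ • t) = y + y := by abel
    calc ‖y‖ + ‖y‖ = ‖y + y‖ := by
          rw [← two_smul ℝ y, norm_smul]; simp [two_mul]
    _ = ‖(y - (2:ℝ)⁻¹ • t) + (y + (2:ℝ)⁻¹ • t)‖ := by rw [h1]
    _ ≤ a + b := norm_add_le _ _
  have ht : ‖t‖ ≤ a + b := by
    have hs : (2:ℝ)⁻¹ • t + (2:ℝ)⁻¹ • t = t := by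
      rw [← add_smul]; norm_num
    have h2 : (y + (2:ℝ)⁻¹ • t) - (y - (2:ℝ)⁻¹ • t) = (2:ℝ)⁻¹ • t + (2:ℝ)⁻¹ • t := by abel
    calc ‖t‖ = ‖(y + (2:ℝ)⁻¹ • t) - (y - (2:ℝ)⁻¹ • t)‖ := by rw [h2, hs]
    _ ≤ b + a := norm_sub_le _ _
    _ = a + b := by ring
  have key : ((1 + ‖y‖) * (1 + ‖t‖) : ℝ) ≤ ((1 + a) * (1 + b)) ^ 2 := by
    nlinarith [norm_nonneg y, norm_nonneg t, mul_nonneg ha0 hb0, sq_nonneg (a + b),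
      mul_nonneg (mul_nonneg ha0 hb0) (add_nonneg ha0 hb0)]
  calc ((1 + ‖y‖) ^ (d + 2) * (1 + ‖t‖) ^ (d + 2) : ℝ)
      = ((1 + ‖y‖) * (1 + ‖t‖)) ^ (d + 2) := (mul_pow _ _ _).symm
  _ ≤ (((1 + a) * (1 + b)) ^ 2) ^ (d + 2) := by
      apply pow_le_pow_left₀ (by positivity) key
  _ = ((1 + a) * (1 + b)) ^ (2 * d + 4) := by rw [← pow_mul]; ring_nf
  _ = (1 + a) ^ (2 * d + 4) * (1 + b) ^ (2 * d + 4) := mul_pow _ _ _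

lemma exists_Kker_bound (fs gs : SchwartzMap 𝔼 ℂ) :
    ∃ C : ℝ, 0 ≤ C ∧ ∀ m, m ≤ d + 1 → ∀ (y t : 𝔼),
      ‖iteratedFDeriv ℝ m (Kker fs gs y) t‖
        ≤ C * ((1 + ‖y‖) ^ (d + 2))⁻¹ * ((1 + ‖t‖) ^ (d + 2))⁻¹ := by
  obtain ⟨S₁, hS₁, hb₁⟩ := schwartz_decay_bound fs (2 * d + 4) (d + 1)
  obtain ⟨S₂, hS₂, hb₂⟩ := schwartz_conj_decay_bound gs (2 * d + 4) (d + 1)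
  refine ⟨2 ^ (d + 1) * ((((d+1)! : ℕ) : ℝ) * S₁ * ((((d+1)! : ℕ) : ℝ) * S₂)), by positivity, ?_⟩
  intro m hm y t
  have habs : |(-(2:ℝ)⁻¹)| ≤ 1 := by
    rw [abs_neg, _root_.abs_of_nonneg (by norm_num : (0:ℝ) ≤ (2:ℝ)⁻¹)]; norm_num
  have habs' : |((2:ℝ)⁻¹)| ≤ 1 := by
    rw [_root_.abs_of_nonneg (by norm_num : (0:ℝ) ≤ (2:ℝ)⁻¹)]; norm_num
  set P₁ : ℝ := ((1 + ‖y - (2:ℝ)⁻¹ • t‖) ^ (2 * d + 4))⁻¹ with hP₁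
  set P₂ : ℝ := ((1 + ‖y + (2:ℝ)⁻¹ • t‖) ^ (2 * d + 4))⁻¹ with hP₂
  have h₁ : ∀ i, i ≤ m → ‖iteratedFDeriv ℝ i (fun s : 𝔼 => fs (y - (2:ℝ)⁻¹ • s)) t‖
      ≤ (((d+1)! : ℕ) : ℝ) * S₁ * P₁ := by
    intro i hi
    have hrw : (fun s : 𝔼 => fs (y - (2:ℝ)⁻¹ • s)) = (fun s : 𝔼 => fs (y + (-(2:ℝ)⁻¹) • s)) := by
      funext u; rw [neg_smul, ← sub_eq_add_neg]
    have hcomp := norm_iFD_comp_affine (fs.smooth ⊤) hb₁ habs y (hi.trans hm) t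
    rw [hrw]
    refine hcomp.trans ?_
    have hfac : ((i ! : ℕ) : ℝ) ≤ (((d+1)! : ℕ) : ℝ) := by
      exact_mod_cast Nat.factorial_le (hi.trans hm)
    have hP₁' : S₁ * ((1 + ‖y + (-(2:ℝ)⁻¹) • t‖) ^ (2*d+4))⁻¹ = S₁ * P₁ := by
      rw [hP₁, neg_smul, ← sub_eq_add_neg]
    rw [hP₁', mul_assoc]
    exact mul_le_mul_of_nonneg_right hfac (by positivity)
  have h₂ : ∀ i, i ≤ m →
      ‖iteratedFDeriv ℝ i (fun s : 𝔼 => (starRingEnd ℂ) (gs (y + (2:ℝ)⁻¹ • s))) t‖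
      ≤ (((d+1)! : ℕ) : ℝ) * S₂ * P₂ := by
    intro i hi
    have hcd0 : ContDiff ℝ ∞∞ (fun v : 𝔼 => (starRingEnd ℂ) (gs v)) :=
      (Complex.conjCLE.toContinuousLinearMap.contDiff).comp (gs.smooth ⊤)
    have hcomp := norm_iFD_comp_affine hcd0 hb₂ habs' y (hi.trans hm) t
    refine hcomp.trans ?_
    have hfac : ((i ! : ℕ) : ℝ) ≤ (((d+1)! : ℕ) : ℝ) := by
      exact_mod_cast Nat.factorial_le (hi.trans hm)
    rw [hP₂, mul_assoc]
    exact mul_le_mul_of_nonneg_right hfac (by positivity)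
  have hmul := norm_iteratedFDeriv_mul_le (𝕜 := ℝ) (A := ℂ) (N := ∞∞) (n := m)
    (contDiff_aff1 fs y) (contDiff_aff2 gs y) t (mod_cast le_top)
  have hKrw : Kker fs gs y = fun s : 𝔼 =>
      (fun s : 𝔼 => fs (y - (2:ℝ)⁻¹ • s)) s *
      (fun s : 𝔼 => (starRingEnd ℂ) (gs (y + (2:ℝ)⁻¹ • s))) s := rfl
  rw [hKrw]
  refine hmul.trans ?_
  have hsum : ∑ i ∈ Finset.range (m + 1),
      ((m.choose i : ℝ) * ‖iteratedFDeriv ℝ i (fun s : 𝔼 => fs (y - (2:ℝ)⁻¹ • s)) t‖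
        * ‖iteratedFDeriv ℝ (m - i) (fun s : 𝔼 => (starRingEnd ℂ) (gs (y + (2:ℝ)⁻¹ • s))) t‖)
      ≤ ∑ i ∈ Finset.range (m + 1),
      ((m.choose i : ℝ) * ((((d+1)! : ℕ) : ℝ) * S₁ * P₁ * ((((d+1)! : ℕ) : ℝ) * S₂ * P₂))) := by
    refine Finset.sum_le_sum fun i hi => ?_
    have hi' : i ≤ m := Nat.lt_succ_iff.mp (Finset.mem_range.mp hi)
    rw [mul_assoc]
    refine mul_le_mul_of_nonneg_left ?_ (by positivity)
    exact mul_le_mul (h₁ i hi') (h₂ (m - i) (Nat.sub_le m i)) (norm_nonneg _) (by positivity)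
  refine hsum.trans ?_
  rw [← Finset.sum_mul]
  have hch : (∑ i ∈ Finset.range (m + 1), (m.choose i : ℝ)) = (2:ℝ) ^ m := by
    rw [← Nat.cast_sum]
    rw [Nat.sum_range_choose]
    push_cast
    ring
  rw [hch]
  have hPP : P₁ * P₂ ≤ ((1 + ‖y‖) ^ (d + 2))⁻¹ * ((1 + ‖t‖) ^ (d + 2))⁻¹ := by
    rw [hP₁, hP₂, ← mul_inv, ← mul_inv]
    exact inv_anti₀ (by positivity) (peetre_aux y t)
  calc (2:ℝ) ^ m * ((((d+1)! : ℕ) : ℝ) * S₁ * P₁ * ((((d+1)! : ℕ) : ℝ) * S₂ * P₂))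
      = (2:ℝ) ^ m * ((((d+1)! : ℕ) : ℝ) * S₁ * ((((d+1)! : ℕ) : ℝ) * S₂)) * (P₁ * P₂) := by ring
  _ ≤ (2:ℝ) ^ (d+1) * ((((d+1)! : ℕ) : ℝ) * S₁ * ((((d+1)! : ℕ) : ℝ) * S₂))
        * (((1 + ‖y‖) ^ (d + 2))⁻¹ * ((1 + ‖t‖) ^ (d + 2))⁻¹) := by
      have h2m : (2:ℝ) ^ m ≤ (2:ℝ) ^ (d+1) := by
        apply pow_le_pow_right₀ (by norm_num) hm
      refine mul_le_mul (mul_le_mul_of_nonneg_right h2m (by positivity)) hPP (by positivity)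
        (by positivity)
  _ = 2 ^ (d + 1) * ((((d+1)! : ℕ) : ℝ) * S₁ * ((((d+1)! : ℕ) : ℝ) * S₂))
        * ((1 + ‖y‖) ^ (d + 2))⁻¹ * ((1 + ‖t‖) ^ (d + 2))⁻¹ := by ring

lemma integrable_inv_pow_E (r : ℕ) (hr : d < r) :
    Integrable (fun t : 𝔼 => (((1 + ‖t‖) ^ r : ℝ))⁻¹) := by
  have h := integrable_one_add_norm (E := 𝔼) (μ := volume) (r := r)
    (by rw [finrank_euclideanSpace_fin]; exact_mod_cast hr)
  refine h.congr (Filter.Eventually.of_forall fun t => ?_)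
  show (1 + ‖t‖ : ℝ) ^ (-(r:ℝ)) = (((1 + ‖t‖) ^ r : ℝ))⁻¹
  rw [Real.rpow_neg (by positivity), Real.rpow_natCast]

lemma norm_iFD_Kker_le (fs gs : SchwartzMap 𝔼 ℂ) : ∃ C : ℝ, 0 ≤ C ∧
    (∀ m, m ≤ d + 1 → ∀ (y t : 𝔼), ‖iteratedFDeriv ℝ m (Kker fs gs y) t‖
        ≤ C * ((1 + ‖y‖) ^ (d + 2))⁻¹ * ((1 + ‖t‖) ^ (d + 2))⁻¹) :=
  exists_Kker_bound fs gs

lemma integrable_norm_iFD_Kker (fs gs : SchwartzMap 𝔼 ℂ) (y : 𝔼) {m : ℕ} (hm : m ≤ d + 1) :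
    Integrable (fun t : 𝔼 => ‖iteratedFDeriv ℝ m (Kker fs gs y) t‖) := by
  obtain ⟨C, hC0, hC⟩ := exists_Kker_bound fs gs
  refine ((integrable_inv_pow_E (d+2) (by omega)).const_mul
      (C * ((1 + ‖y‖) ^ (d + 2))⁻¹)).mono' ?_ ?_
  · exact (((contDiff_Kker fs gs y).continuous_iteratedFDeriv
      (mod_cast le_top)).norm).aestronglyMeasurable
  · filter_upwards with t
    rw [norm_norm]
    calc ‖iteratedFDeriv ℝ m (Kker fs gs y) t‖
        ≤ C * ((1 + ‖y‖) ^ (d + 2))⁻¹ * ((1 + ‖t‖) ^ (d + 2))⁻¹ := hC m hm y t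
    _ = C * ((1 + ‖y‖) ^ (d + 2))⁻¹ * ((1 + ‖t‖) ^ (d + 2))⁻¹ := by ring

lemma integrable_Kker (fs gs : SchwartzMap 𝔼 ℂ) (y : 𝔼) :
    Integrable (Kker fs gs y) := by
  obtain ⟨C, hC0, hC⟩ := exists_Kker_bound fs gs
  refine ((integrable_inv_pow_E (d+2) (by omega)).const_mul
      (C * ((1 + ‖y‖) ^ (d + 2))⁻¹)).mono'
    ((contDiff_Kker fs gs y).continuous.aestronglyMeasurable) ?_
  filter_upwards with t
  have h0 := hC 0 (by omega) y t
  rw [norm_iteratedFDeriv_zero] at h0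
  calc ‖Kker fs gs y t‖ ≤ C * ((1 + ‖y‖) ^ (d + 2))⁻¹ * ((1 + ‖t‖) ^ (d + 2))⁻¹ := h0
  _ = C * ((1 + ‖y‖) ^ (d + 2))⁻¹ * ((1 + ‖t‖) ^ (d + 2))⁻¹ := by ring

lemma one_add_pow_le (x : ℝ) (hx : 0 ≤ x) (n : ℕ) :
    (1 + x) ^ n ≤ 2 ^ n * (1 + x ^ n) := by
  rcases le_total x 1 with h | h
  · have h1 : (1 + x) ^ n ≤ 2 ^ n :=
      pow_le_pow_left₀ (by positivity) (by linarith) n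
    nlinarith [pow_nonneg hx n, pow_pos (show (0:ℝ) < 2 by norm_num) n]
  · have h1 : (1 + x) ^ n ≤ (2 * x) ^ n :=
      pow_le_pow_left₀ (by positivity) (by linarith) n
    rw [mul_pow] at h1
    nlinarith [pow_pos (show (0:ℝ) < 2 by norm_num) n]

lemma exists_fourier_Kker_bound (fs gs : SchwartzMap 𝔼 ℂ) :
    ∃ C : ℝ, 0 ≤ C ∧ ∀ (y w : 𝔼),
      ‖𝓕 (Kker fs gs y) w‖ ≤ C * ((1 + ‖y‖) ^ (d + 2))⁻¹ * ((1 + ‖w‖) ^ (d + 1))⁻¹ := by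
  obtain ⟨C, hC0, hC⟩ := exists_Kker_bound fs gs
  set I0 : ℝ := ∫ t : 𝔼, (((1 + ‖t‖) ^ (d + 2) : ℝ))⁻¹ with hI0
  have hI0nn : 0 ≤ I0 := integral_nonneg fun t => by positivity
  have hint : ∀ n, n ≤ d + 1 → ∀ y : 𝔼,
      (∫ t : 𝔼, ‖iteratedFDeriv ℝ n (Kker fs gs y) t‖)
        ≤ C * I0 * ((1 + ‖y‖) ^ (d + 2))⁻¹ := by
    intro n hn y
    have hmono := integral_mono_of_nonneg
      (Filter.Eventually.of_forall fun t => norm_nonneg _)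
      ((integrable_inv_pow_E (d+2) (show d < d + 2 by omega)).const_mul
        (C * ((1 + ‖y‖) ^ (d + 2))⁻¹))
      (Filter.Eventually.of_forall fun t => by
        have := hC n hn y t
        calc ‖iteratedFDeriv ℝ n (Kker fs gs y) t‖
            ≤ C * ((1 + ‖y‖) ^ (d + 2))⁻¹ * ((1 + ‖t‖) ^ (d + 2))⁻¹ := this
        _ = C * ((1 + ‖y‖) ^ (d + 2))⁻¹ * ((1 + ‖t‖) ^ (d + 2))⁻¹ := rfl)
    rw [MeasureTheory.integral_const_mul] at hmono
    calc (∫ t : 𝔼, ‖iteratedFDeriv ℝ n (Kker fs gs y) t‖)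
        ≤ C * ((1 + ‖y‖) ^ (d + 2))⁻¹ * I0 := hmono
    _ = C * I0 * ((1 + ‖y‖) ^ (d + 2))⁻¹ := by ring
  have hbase : ∀ n, n ≤ d + 1 → ∀ (y w : 𝔼),
      ‖w‖ ^ n * ‖𝓕 (Kker fs gs y) w‖
        ≤ 2 ^ n * ((n + 1 : ℝ) * (C * I0 * ((1 + ‖y‖) ^ (d + 2))⁻¹)) := by
    intro n hn y w
    have h'f : ∀ (k m : ℕ), (k : ℕ∞) ≤ (0 : ℕ∞) → (m : ℕ∞) ≤ ((d : ℕ∞) + 1) →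
        Integrable (fun v : 𝔼 => ‖v‖ ^ k * ‖iteratedFDeriv ℝ m (Kker fs gs y) v‖) := by
      intro k m hk hm
      have hk0 : k = 0 := by exact_mod_cast le_antisymm hk zero_le
      have hm' : m ≤ d + 1 := by exact_mod_cast hm
      subst hk0
      simpa using integrable_norm_iFD_Kker fs gs y hm'
    have H := Real.pow_mul_norm_iteratedFDeriv_fourier_le (V := 𝔼)
      (K := (0 : ℕ∞)) (N := ((d : ℕ∞) + 1)) (f := Kker fs gs y)
      ((contDiff_Kker fs gs y).of_le (mod_cast le_top)) h'f
      (le_refl (0 : ℕ∞)) (by exact_mod_cast hn) w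
    rw [norm_iteratedFDeriv_zero] at H
    refine H.trans ?_
    have hsum : (∑ p ∈ Finset.range (0 + 1) ×ˢ Finset.range (n + 1),
        ∫ v : 𝔼, ‖v‖ ^ p.1 * ‖iteratedFDeriv ℝ p.2 (Kker fs gs y) v‖)
        ≤ (n + 1 : ℝ) * (C * I0 * ((1 + ‖y‖) ^ (d + 2))⁻¹) := by
      rw [Finset.sum_product]
      rw [Finset.sum_range_one]
      have heq : ∀ j ∈ Finset.range (n + 1),
          (∫ v : 𝔼, ‖v‖ ^ 0 * ‖iteratedFDeriv ℝ j (Kker fs gs y) v‖)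
          ≤ C * I0 * ((1 + ‖y‖) ^ (d + 2))⁻¹ := by
        intro j hj
        have hj' : j ≤ d + 1 := le_trans (Nat.lt_succ_iff.mp (Finset.mem_range.mp hj)) hn
        calc (∫ v : 𝔼, ‖v‖ ^ 0 * ‖iteratedFDeriv ℝ j (Kker fs gs y) v‖)
            = ∫ v : 𝔼, ‖iteratedFDeriv ℝ j (Kker fs gs y) v‖ := by
              congr 1; funext v; rw [pow_zero, one_mul]
        _ ≤ C * I0 * ((1 + ‖y‖) ^ (d + 2))⁻¹ := hint j hj' y
      calc (∑ j ∈ Finset.range (n + 1),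
          ∫ v : 𝔼, ‖v‖ ^ 0 * ‖iteratedFDeriv ℝ j (Kker fs gs y) v‖)
          ≤ ∑ j ∈ Finset.range (n + 1), (C * I0 * ((1 + ‖y‖) ^ (d + 2))⁻¹) :=
            Finset.sum_le_sum heq
      _ = (n + 1 : ℝ) * (C * I0 * ((1 + ‖y‖) ^ (d + 2))⁻¹) := by
            rw [Finset.sum_const, Finset.card_range, nsmul_eq_mul]; push_cast; ring
    simp only [pow_zero, one_mul, Nat.cast_zero, mul_zero, zero_add]
    refine mul_le_mul_of_nonneg_left hsum (by positivity)
  set B : ℝ := C * I0 with hB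
  have hBnn : 0 ≤ B := mul_nonneg hC0 hI0nn
  refine ⟨2 ^ (d + 1) * (B + 2 ^ (d + 1) * ((d + 2 : ℝ) * B)), by positivity, fun y w => ?_⟩
  set iy : ℝ := ((1 + ‖y‖) ^ (d + 2))⁻¹ with hiy
  have hiynn : 0 ≤ iy := by positivity
  have hw1 : (0:ℝ) < (1 + ‖w‖) ^ (d + 1) := by positivity
  have hkey : (1 + ‖w‖) ^ (d + 1) * ‖𝓕 (Kker fs gs y) w‖
      ≤ 2 ^ (d + 1) * (B + 2 ^ (d + 1) * ((d + 2 : ℝ) * B)) * iy := by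
    have h0 := hbase 0 (by omega) y w
    have h1 := hbase (d + 1) (le_refl _) y w
    rw [pow_zero, one_mul, pow_zero, one_mul] at h0
    have hup := one_add_pow_le ‖w‖ (norm_nonneg _) (d + 1)
    have hF : 0 ≤ ‖𝓕 (Kker fs gs y) w‖ := norm_nonneg _
    calc (1 + ‖w‖) ^ (d + 1) * ‖𝓕 (Kker fs gs y) w‖
        ≤ (2 ^ (d + 1) * (1 + ‖w‖ ^ (d + 1))) * ‖𝓕 (Kker fs gs y) w‖ :=
          mul_le_mul_of_nonneg_right hup hF
    _ = 2 ^ (d + 1) * (‖𝓕 (Kker fs gs y) w‖ + ‖w‖ ^ (d + 1) * ‖𝓕 (Kker fs gs y) w‖) := by ring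
    _ ≤ 2 ^ (d + 1) * ((1 * (B * iy)) + 2 ^ (d + 1) * ((d + 1 + 1 : ℝ) * (B * iy))) := by
        have h0' : ‖𝓕 (Kker fs gs y) w‖ ≤ 1 * (B * iy) := by
          refine h0.trans ?_
          rw [hB, hiy]; push_cast; ring_nf; rfl
        have h1' : ‖w‖ ^ (d + 1) * ‖𝓕 (Kker fs gs y) w‖
            ≤ 2 ^ (d + 1) * ((d + 1 + 1 : ℝ) * (B * iy)) := by
          refine h1.trans ?_
          rw [hB, hiy]; push_cast; ring_nf; rfl
        have := add_le_add h0' h1'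
        refine mul_le_mul_of_nonneg_left this (by positivity)
    _ = 2 ^ (d + 1) * (B + 2 ^ (d + 1) * ((d + 2 : ℝ) * B)) * iy := by push_cast; ring
  calc ‖𝓕 (Kker fs gs y) w‖
      = ((1 + ‖w‖) ^ (d + 1) * ‖𝓕 (Kker fs gs y) w‖) * ((1 + ‖w‖) ^ (d + 1))⁻¹ := by
        field_simp
  _ ≤ (2 ^ (d + 1) * (B + 2 ^ (d + 1) * ((d + 2 : ℝ) * B)) * iy) * ((1 + ‖w‖) ^ (d + 1))⁻¹ := by
        refine mul_le_mul_of_nonneg_right hkey (by positivity)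
  _ = 2 ^ (d + 1) * (B + 2 ^ (d + 1) * ((d + 2 : ℝ) * B)) * ((1 + ‖y‖) ^ (d + 2))⁻¹
        * ((1 + ‖w‖) ^ (d + 1))⁻¹ := by rw [hiy]

lemma continuous_fourier_Kker (fs gs : SchwartzMap 𝔼 ℂ) (y : 𝔼) :
    Continuous (𝓕 (Kker fs gs y)) :=
  VectorFourier.fourierIntegral_continuous Real.continuous_fourierChar
    (by exact continuous_inner) (integrable_Kker fs gs y)

lemma integrable_fourier_Kker (fs gs : SchwartzMap 𝔼 ℂ) (y : 𝔼) :
    Integrable (𝓕 (Kker fs gs y)) := by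
  obtain ⟨C, hC0, hC⟩ := exists_fourier_Kker_bound fs gs
  refine ((integrable_inv_pow_E (d+1) (by omega)).const_mul
      (C * ((1 + ‖y‖) ^ (d + 2))⁻¹)).mono'
    (continuous_fourier_Kker fs gs y).aestronglyMeasurable ?_
  filter_upwards with w
  calc ‖𝓕 (Kker fs gs y) w‖ ≤ C * ((1 + ‖y‖) ^ (d + 2))⁻¹ * ((1 + ‖w‖) ^ (d + 1))⁻¹ := hC y w
  _ = C * ((1 + ‖y‖) ^ (d + 2))⁻¹ * ((1 + ‖w‖) ^ (d + 1))⁻¹ := rfl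

lemma fourierInv_fourier_Kker (fs gs : SchwartzMap 𝔼 ℂ) (y v : 𝔼) :
    𝓕⁻ (𝓕 (Kker fs gs y)) v = Kker fs gs y v :=
  (integrable_Kker fs gs y).fourierInv_fourier_eq (integrable_fourier_Kker fs gs y)
    ((contDiff_Kker fs gs y).continuous.continuousAt)

def toS (d : ℕ) : SchwartzMap (RR d) ℂ →L[ℝ] SchwartzMap (EuclideanSpace ℝ (Fin d)) ℂ :=
  SchwartzMap.compCLMOfContinuousLinearEquiv ℝ (EuclideanSpace.equiv (Fin d) ℝ)

lemma wigner_eq_fourier (f g : SchwartzMap (RR d) ℂ) (y η : 𝔼) :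
    wigner d ⇑f ⇑g ((y, η) : RR2 d)
      = (((2 * Real.pi) ^ (-(d : ℝ)/2) : ℝ) : ℂ)
        * 𝓕 (Kker (toS d f) (toS d g) y) ((-(2 * Real.pi)⁻¹ : ℝ) • η) := by
  unfold wigner
  congr 1
  rw [Real.fourier_eq']
  rw [← (EuclideanSpace.volume_preserving_symm_measurableEquiv_toLp (Fin d)).integral_comp']
  congr 1
  funext t
  show (f (y - (2:ℝ)⁻¹ • t) * (starRingEnd ℂ) (g (y + (2:ℝ)⁻¹ • t)))
      * Complex.exp (Complex.I * ((∑ j, t j * η j : ℝ) : ℂ))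
    = Complex.exp (((-2 * Real.pi * (inner ℝ t (((-(2 * Real.pi)⁻¹ : ℝ)) • η) : ℝ) : ℝ) : ℂ)
        * Complex.I)
      • (f (y - (2:ℝ)⁻¹ • t) * (starRingEnd ℂ) (g (y + (2:ℝ)⁻¹ • t)))
  rw [smul_eq_mul]
  have hr : ((-2 * Real.pi * (inner ℝ t (((-(2 * Real.pi)⁻¹ : ℝ)) • η) : ℝ) : ℝ) : ℂ)
      = ((∑ j, t j * η j : ℝ) : ℂ) := by
    norm_cast
    rw [real_inner_smul_right]
    have hin2 : (inner ℝ t η : ℝ) = ∑ j, t j * η j := by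
      simp [PiLp.inner_apply, RCLike.inner_apply, mul_comm]
    rw [← hin2]
    have hpi : (2 * Real.pi) ≠ 0 := by positivity
    field_simp
    rw [Int.cast_negSucc]; push_cast; ring
  rw [hr]
  ring

lemma exists_wigner_bound (f g : SchwartzMap (RR d) ℂ) :
    ∃ C : ℝ, 0 ≤ C ∧ ∀ (y η : 𝔼), ‖wigner d ⇑f ⇑g ((y, η) : RR2 d)‖
      ≤ C * ((1 + ‖y‖) ^ (d + 2))⁻¹ * ((1 + ‖η‖) ^ (d + 1))⁻¹ := by
  obtain ⟨C, hC0, hC⟩ := exists_fourier_Kker_bound (toS d f) (toS d g)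
  refine ⟨(2 * Real.pi) ^ (-(d : ℝ)/2) * C * (2 * Real.pi) ^ (d + 1), by positivity,
    fun y η => ?_⟩
  rw [wigner_eq_fourier, norm_mul]
  have hc2 : ‖(((2 * Real.pi) ^ (-(d : ℝ)/2) : ℝ) : ℂ)‖ = (2 * Real.pi) ^ (-(d : ℝ)/2) := by
    rw [Complex.norm_real, Real.norm_eq_abs, _root_.abs_of_pos (by positivity)]
  have hb := hC y (((-(2 * Real.pi)⁻¹ : ℝ)) • η)
  have hnorm : ‖((-(2 * Real.pi)⁻¹ : ℝ)) • η‖ = (2 * Real.pi)⁻¹ * ‖η‖ := by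
    rw [norm_smul, Real.norm_eq_abs, abs_neg, _root_.abs_of_pos (by positivity)]
  have hmono : (1 + ‖η‖) ^ (d + 1)
      ≤ (2 * Real.pi) ^ (d + 1) * (1 + ‖((-(2 * Real.pi)⁻¹ : ℝ)) • η‖) ^ (d + 1) := by
    rw [← mul_pow]
    apply pow_le_pow_left₀ (by positivity)
    rw [hnorm]
    have hπ : 1 ≤ 2 * Real.pi := by nlinarith [Real.pi_gt_three]
    have hπ0 : (2 * Real.pi) ≠ 0 := by positivity
    calc 1 + ‖η‖ ≤ 2 * Real.pi + ‖η‖ := by linarith [norm_nonneg η]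
    _ = 2 * Real.pi * (1 + (2 * Real.pi)⁻¹ * ‖η‖) := by field_simp
  have hApos : (0:ℝ) < (1 + ‖η‖) ^ (d + 1) := by positivity
  have hBpos : (0:ℝ) < (2 * Real.pi) ^ (d + 1) := by positivity
  have hd1 : ((1 + ‖((-(2 * Real.pi)⁻¹ : ℝ)) • η‖) ^ (d + 1))⁻¹
      ≤ (2 * Real.pi) ^ (d + 1) * ((1 + ‖η‖) ^ (d + 1))⁻¹ := by
    have hth := inv_anti₀ hApos hmono
    rw [mul_inv] at hth
    calc ((1 + ‖((-(2 * Real.pi)⁻¹ : ℝ)) • η‖) ^ (d + 1))⁻¹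
        = (2 * Real.pi) ^ (d + 1) * (((2 * Real.pi) ^ (d + 1))⁻¹ *
            ((1 + ‖((-(2 * Real.pi)⁻¹ : ℝ)) • η‖) ^ (d + 1))⁻¹) :=
          (mul_inv_cancel_left₀ hBpos.ne' _).symm
    _ ≤ (2 * Real.pi) ^ (d + 1) * ((1 + ‖η‖) ^ (d + 1))⁻¹ :=
          mul_le_mul_of_nonneg_left hth hBpos.le
  rw [hc2]
  calc (2 * Real.pi) ^ (-(d : ℝ)/2) * ‖𝓕 (Kker (toS d f) (toS d g) y)
        (((-(2 * Real.pi)⁻¹ : ℝ)) • η)‖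
      ≤ (2 * Real.pi) ^ (-(d : ℝ)/2) * (C * ((1 + ‖y‖) ^ (d + 2))⁻¹ *
          ((1 + ‖((-(2 * Real.pi)⁻¹ : ℝ)) • η‖) ^ (d + 1))⁻¹) :=
        mul_le_mul_of_nonneg_left hb (by positivity)
  _ ≤ (2 * Real.pi) ^ (-(d : ℝ)/2) * (C * ((1 + ‖y‖) ^ (d + 2))⁻¹ *
          ((2 * Real.pi) ^ (d + 1) * ((1 + ‖η‖) ^ (d + 1))⁻¹)) := by
        refine mul_le_mul_of_nonneg_left ?_ (by positivity)
        exact mul_le_mul_of_nonneg_left hd1 (by positivity)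
  _ = (2 * Real.pi) ^ (-(d : ℝ)/2) * C * (2 * Real.pi) ^ (d + 1)
        * ((1 + ‖y‖) ^ (d + 2))⁻¹ * ((1 + ‖η‖) ^ (d + 1))⁻¹ := by ring

lemma continuous_wigner_integrand (f g : SchwartzMap (RR d) ℂ) :
    Continuous (fun p : RR2 d × RR d =>
      f (p.1.1 - (2:ℝ)⁻¹ • p.2) * (starRingEnd ℂ) (g (p.1.1 + (2:ℝ)⁻¹ • p.2))
        * Complex.exp (Complex.I * ((∑ j, p.2 j * p.1.2 j : ℝ) : ℂ))) := by
  refine Continuous.mul (Continuous.mul ?_ ?_) ?_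
  · exact f.continuous.comp (by fun_prop)
  · exact Complex.conjCLE.continuous.comp (g.continuous.comp (by fun_prop))
  · refine Complex.continuous_exp.comp (Continuous.mul continuous_const ?_)
    refine Complex.continuous_ofReal.comp ?_
    refine continuous_finset_sum _ fun j _ => ?_
    exact ((continuous_apply j).comp continuous_snd).mul
      ((continuous_apply j).comp (continuous_snd.comp continuous_fst))

lemma aestronglyMeasurable_wigner (f g : SchwartzMap (RR d) ℂ) :
    AEStronglyMeasurable (fun Y : RR2 d => wigner d ⇑f ⇑g Y) volume := by
  unfold wigner
  apply AEStronglyMeasurable.const_mul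
  exact ((continuous_wigner_integrand f g).aestronglyMeasurable
    (μ := (volume : Measure (RR2 d)).prod (volume : Measure (RR d)))).integral_prod_right'

lemma integrable_inv_pow_pi (r : ℕ) (hr : d < r) :
    Integrable (fun u : RR d =>
      (((1 + ‖(MeasurableEquiv.toLp 2 (Fin d → ℝ)) u‖) ^ r : ℝ))⁻¹) := by
  have h := integrable_inv_pow_E (d := d) r hr
  have mp := (EuclideanSpace.volume_preserving_symm_measurableEquiv_toLp (Fin d)).symm
  exact (mp.integrable_comp_emb
    (MeasurableEquiv.measurableEmbedding _)).mpr h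

lemma integrable_wigner_kernel (f g : SchwartzMap (RR d) ℂ) (X : RR2 d) :
    Integrable (fun Y : RR2 d => wigner d ⇑f ⇑g Y
      * Complex.exp (2 * Complex.I * ((sform d X Y : ℝ) : ℂ))) := by
  obtain ⟨C, hC0, hC⟩ := exists_wigner_bound f g
  have hmeas : AEStronglyMeasurable (fun Y : RR2 d => wigner d ⇑f ⇑g Y
      * Complex.exp (2 * Complex.I * ((sform d X Y : ℝ) : ℂ))) volume := by
    refine (aestronglyMeasurable_wigner f g).mul (Continuous.aestronglyMeasurable ?_)
    refine Complex.continuous_exp.comp (Continuous.mul continuous_const ?_)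
    refine Complex.continuous_ofReal.comp ?_
    unfold sform
    refine Continuous.sub ?_ ?_
    · exact continuous_finset_sum _ fun j _ =>
        (((continuous_apply j).comp continuous_fst).mul continuous_const)
    · exact continuous_finset_sum _ fun j _ =>
        (continuous_const.mul ((continuous_apply j).comp continuous_snd))
  have hbd : Integrable (fun Y : RR2 d =>
      C * ((((1 + ‖(MeasurableEquiv.toLp 2 (Fin d → ℝ)) Y.1‖) ^ (d+2) : ℝ))⁻¹
        * (((1 + ‖(MeasurableEquiv.toLp 2 (Fin d → ℝ)) Y.2‖) ^ (d+1) : ℝ))⁻¹)) := by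
    have h2 := (integrable_inv_pow_pi (d := d) (d + 2) (show d < d + 2 by omega)).mul_prod
      (integrable_inv_pow_pi (d := d) (d + 1) (show d < d + 1 by omega))
    rw [← MeasureTheory.Measure.volume_eq_prod] at h2
    exact h2.const_mul C
  refine hbd.mono' hmeas ?_
  filter_upwards with Y
  rw [norm_mul]
  have hre : (2 * Complex.I * ((sform d X Y : ℝ) : ℂ)).re = 0 := by simp
  have hexp : ‖Complex.exp (2 * Complex.I * ((sform d X Y : ℝ) : ℂ))‖ = 1 := by
    rw [Complex.norm_exp, hre, Real.exp_zero]
  rw [hexp, mul_one]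
  have := hC ((MeasurableEquiv.toLp 2 (Fin d → ℝ)) Y.1)
    ((MeasurableEquiv.toLp 2 (Fin d → ℝ)) Y.2)
  calc ‖wigner d ⇑f ⇑g Y‖
      ≤ C * ((1 + ‖(MeasurableEquiv.toLp 2 (Fin d → ℝ)) Y.1‖) ^ (d+2))⁻¹
        * ((1 + ‖(MeasurableEquiv.toLp 2 (Fin d → ℝ)) Y.2‖) ^ (d+1))⁻¹ := this
  _ = C * (((1 + ‖(MeasurableEquiv.toLp 2 (Fin d → ℝ)) Y.1‖) ^ (d+2))⁻¹
        * ((1 + ‖(MeasurableEquiv.toLp 2 (Fin d → ℝ)) Y.2‖) ^ (d+1))⁻¹) := by ring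

lemma inner_integral_eq (f g : SchwartzMap (RR d) ℂ) (x y : 𝔼) :
    (∫ η : RR d, wigner d ⇑f ⇑g ((y, η) : RR2 d)
        * Complex.exp (-(2 * Complex.I * ((∑ j, x j * η j : ℝ) : ℂ))))
      = (((2 * Real.pi) ^ (-(d : ℝ)/2) : ℝ) : ℂ) * (((2 * Real.pi) ^ d : ℝ) : ℂ)
          * Kker (toS d f) (toS d g) y (x + x) := by
  have hπ : (0:ℝ) < 2 * Real.pi := by positivity
  set K := Kker (toS d f) (toS d g) y with hK
  set H : 𝔼 → ℂ := fun η => 𝓕 K ((-(2 * Real.pi)⁻¹ : ℝ) • η)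
      * Complex.exp (-(2 * Complex.I * ((inner ℝ x η : ℝ) : ℂ))) with hH
  have step1 : (∫ η : RR d, wigner d ⇑f ⇑g ((y, η) : RR2 d)
        * Complex.exp (-(2 * Complex.I * ((∑ j, x j * η j : ℝ) : ℂ))))
      = (((2 * Real.pi) ^ (-(d : ℝ)/2) : ℝ) : ℂ) * ∫ η : 𝔼, H η := by
    rw [← (EuclideanSpace.volume_preserving_symm_measurableEquiv_toLp (Fin d)).integral_comp']
    rw [← MeasureTheory.integral_const_mul]
    congr 1
    funext η
    have hin : ((∑ j, x j * η j : ℝ) : ℂ) = ((inner ℝ x η : ℝ) : ℂ) := by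
      norm_cast
      try simp [PiLp.inner_apply, RCLike.inner_apply, mul_comm]
    show wigner d ⇑f ⇑g ((y, η) : RR2 d)
        * Complex.exp (-(2 * Complex.I * ((∑ j, x j * η j : ℝ) : ℂ)))
      = (((2 * Real.pi) ^ (-(d : ℝ)/2) : ℝ) : ℂ) * H η
    rw [wigner_eq_fourier f g y η, hin, hH]
    ring
  rw [step1]
  have hHw : ∀ w : 𝔼, H ((-(2 * Real.pi) : ℝ) • w)
      = Complex.exp (((2 * Real.pi * (inner ℝ w (x + x) : ℝ) : ℝ) : ℂ) * Complex.I) • 𝓕 K w := by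
    intro w
    have h1 : ((-(2 * Real.pi)⁻¹ : ℝ)) • (((-(2 * Real.pi) : ℝ)) • w) = w := by
      rw [smul_smul]
      have : ((-(2 * Real.pi)⁻¹ : ℝ)) * ((-(2 * Real.pi) : ℝ)) = 1 := by
        rw [neg_mul_neg, inv_mul_cancel₀ hπ.ne']
      rw [this, one_smul]
    have h2 : (inner ℝ x (((-(2 * Real.pi) : ℝ)) • w) : ℝ) = -(2 * Real.pi) * (inner ℝ x w : ℝ) :=
      real_inner_smul_right _ _ _
    have h3 : (inner ℝ w (x + x) : ℝ) = (inner ℝ x w : ℝ) + (inner ℝ x w : ℝ) := by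
      rw [inner_add_right]
      rw [real_inner_comm w x]
    rw [hH]
    simp only [h1, h2, h3]
    rw [smul_eq_mul]
    rw [show (-(2 * Complex.I * ((-(2 * Real.pi) * (inner ℝ x w : ℝ) : ℝ) : ℂ)))
        = (((2 * Real.pi * ((inner ℝ x w : ℝ) + (inner ℝ x w : ℝ)) : ℝ) : ℂ)) * Complex.I by
      push_cast; ring]
    ring
  have hCoV := MeasureTheory.Measure.integral_comp_smul (μ := (volume : Measure 𝔼)) (f := H)
    (R := (-(2 * Real.pi) : ℝ))
  rw [finrank_euclideanSpace_fin] at hCoV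
  have habs : |(((-(2 * Real.pi) : ℝ)) ^ d)⁻¹| = (((2 * Real.pi) ^ d : ℝ))⁻¹ := by
    rw [abs_inv, _root_.abs_pow, abs_neg, _root_.abs_of_pos hπ]
  rw [habs] at hCoV
  have hinvint : (∫ w : 𝔼, H ((-(2 * Real.pi) : ℝ) • w)) = K (x + x) := by
    have : (∫ w : 𝔼, H ((-(2 * Real.pi) : ℝ) • w))
        = ∫ w : 𝔼, Complex.exp (((2 * Real.pi * (inner ℝ w (x + x) : ℝ) : ℝ) : ℂ) * Complex.I)
            • 𝓕 K w := by
      congr 1; funext w; exact hHw w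
    rw [this, ← Real.fourierInv_eq']
    exact fourierInv_fourier_Kker (toS d f) (toS d g) y (x + x)
  rw [hinvint] at hCoV
  -- hCoV : K (x+x) = ((2π)^d)⁻¹ • ∫ H
  have hfin : (∫ η : 𝔼, H η) = (((2 * Real.pi) ^ d : ℝ) : ℂ) * K (x + x) := by
    rw [hCoV, Complex.real_smul, Complex.ofReal_inv,
      mul_inv_cancel_left₀ (Complex.ofReal_ne_zero.mpr (by positivity))]
  rw [hfin]
  ring

def toE (d : ℕ) (u : RR d) : EuclideanSpace ℝ (Fin d) := WithLp.toLp 2 u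


end SymplFTAux

/-- `F_σ(W_{f,g}) = W_{f̌,g}` for Schwartz `f, g`, where `f̌(x) = f(−x)`. -/
theorem symplFT_wigner
    (d : ℕ) (hd : 0 < d) (f g : SchwartzMap (RR d) ℂ) (X : RR2 d) :
    symplFT d (wigner d ⇑f ⇑g) X = wigner d (fun x => f (-x)) ⇑g X := by
  obtain ⟨x, ξ⟩ := X
  unfold symplFT
  have hint := integrable_wigner_kernel f g (x, ξ)
  rw [MeasureTheory.Measure.volume_eq_prod] at hint
  -- the inner integral
  have hinner : ∀ y : RR d,
      (∫ η : RR d, wigner d ⇑f ⇑g (y, η)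
          * Complex.exp (2 * Complex.I * ((sform d (x, ξ) (y, η) : ℝ) : ℂ)))
      = Complex.exp (2 * Complex.I * ((∑ j, y j * ξ j : ℝ) : ℂ))
        * ((((2 * Real.pi) ^ (-(d : ℝ)/2) : ℝ) : ℂ) * (((2 * Real.pi) ^ d : ℝ) : ℂ)
            * Kker (toS d f) (toS d g) (toE d y) (toE d x + toE d x)) := by
    intro y
    have hptw : ∀ η : RR d, wigner d ⇑f ⇑g (y, η)
        * Complex.exp (2 * Complex.I * ((sform d (x, ξ) (y, η) : ℝ) : ℂ))
        = Complex.exp (2 * Complex.I * ((∑ j, y j * ξ j : ℝ) : ℂ))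
          * (wigner d ⇑f ⇑g (y, η)
            * Complex.exp (-(2 * Complex.I * ((∑ j, x j * η j : ℝ) : ℂ)))) := by
      intro η
      have hsp : (2 * Complex.I * ((sform d (x, ξ) (y, η) : ℝ) : ℂ))
          = 2 * Complex.I * ((∑ j, y j * ξ j : ℝ) : ℂ)
            + (-(2 * Complex.I * ((∑ j, x j * η j : ℝ) : ℂ))) := by
        unfold sform
        push_cast
        ring
      rw [hsp, Complex.exp_add]
      ring
    calc (∫ η : RR d, wigner d ⇑f ⇑g (y, η)
          * Complex.exp (2 * Complex.I * ((sform d (x, ξ) (y, η) : ℝ) : ℂ)))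
        = ∫ η : RR d, Complex.exp (2 * Complex.I * ((∑ j, y j * ξ j : ℝ) : ℂ))
            * (wigner d ⇑f ⇑g (y, η)
              * Complex.exp (-(2 * Complex.I * ((∑ j, x j * η j : ℝ) : ℂ)))) := by
          congr 1; funext η; exact hptw η
    _ = Complex.exp (2 * Complex.I * ((∑ j, y j * ξ j : ℝ) : ℂ))
          * ∫ η : RR d, wigner d ⇑f ⇑g (y, η)
              * Complex.exp (-(2 * Complex.I * ((∑ j, x j * η j : ℝ) : ℂ))) :=
        MeasureTheory.integral_const_mul _ _
    _ = Complex.exp (2 * Complex.I * ((∑ j, y j * ξ j : ℝ) : ℂ))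
        * ((((2 * Real.pi) ^ (-(d : ℝ)/2) : ℝ) : ℂ) * (((2 * Real.pi) ^ d : ℝ) : ℂ)
            * Kker (toS d f) (toS d g) (toE d y) (toE d x + toE d x)) :=
        congrArg (fun z => Complex.exp (2 * Complex.I * ((∑ j, y j * ξ j : ℝ) : ℂ)) * z)
          (inner_integral_eq f g (toE d x) (toE d y))
  have hKapp : ∀ y : RR d, Kker (toS d f) (toS d g) (toE d y) (toE d x + toE d x)
      = f (y - x) * (starRingEnd ℂ) (g (y + x)) := by
    intro y
    have h2 : (2:ℝ)⁻¹ • (toE d x + toE d x) = toE d x := by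
      rw [← two_smul ℝ (toE d x), smul_smul]
      norm_num
    unfold Kker
    rw [h2]
    rfl
  have hiter : (∫ Y : RR2 d, wigner d ⇑f ⇑g Y
        * Complex.exp (2 * Complex.I * ((sform d (x, ξ) Y : ℝ) : ℂ)))
      = ∫ y : RR d, Complex.exp (2 * Complex.I * ((∑ j, y j * ξ j : ℝ) : ℂ))
          * ((((2 * Real.pi) ^ (-(d : ℝ)/2) : ℝ) : ℂ) * (((2 * Real.pi) ^ d : ℝ) : ℂ)
              * (f (y - x) * (starRingEnd ℂ) (g (y + x)))) := by
    rw [MeasureTheory.Measure.volume_eq_prod, MeasureTheory.integral_prod _ hint]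
    congr 1
    funext y
    rw [show (∫ η : RR d, wigner d ⇑f ⇑g (y, η)
        * Complex.exp (2 * Complex.I * ((sform d (x, ξ) (y, η) : ℝ) : ℂ)))
      = Complex.exp (2 * Complex.I * ((∑ j, y j * ξ j : ℝ) : ℂ))
        * ((((2 * Real.pi) ^ (-(d : ℝ)/2) : ℝ) : ℂ) * (((2 * Real.pi) ^ d : ℝ) : ℂ)
            * Kker (toS d f) (toS d g) (toE d y) (toE d x + toE d x)) from hinner y]
    rw [hKapp y]
  rw [hiter]
  -- now the right-hand side
  unfold wigner
  have hcov := MeasureTheory.Measure.integral_comp_smul (μ := (volume : Measure (RR d)))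
    (f := fun z : RR d => f (-(x - (2:ℝ)⁻¹ • z)) * (starRingEnd ℂ) (g (x + (2:ℝ)⁻¹ • z))
      * Complex.exp (Complex.I * ((∑ j, z j * ξ j : ℝ) : ℂ))) (R := (2:ℝ))
  rw [Module.finrank_fin_fun] at hcov
  have habs2 : |((2:ℝ) ^ d)⁻¹| = ((2:ℝ) ^ d)⁻¹ := by
    rw [abs_inv, _root_.abs_pow]
    norm_num
  rw [habs2] at hcov
  have hptw2 : ∀ y : RR d,
      (f (-(x - (2:ℝ)⁻¹ • ((2:ℝ) • y))) * (starRingEnd ℂ) (g (x + (2:ℝ)⁻¹ • ((2:ℝ) • y)))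
        * Complex.exp (Complex.I * ((∑ j, ((2:ℝ) • y) j * ξ j : ℝ) : ℂ)))
      = f (y - x) * (starRingEnd ℂ) (g (x + y))
        * Complex.exp (2 * Complex.I * ((∑ j, y j * ξ j : ℝ) : ℂ)) := by
    intro y
    have hsm : (2:ℝ)⁻¹ • ((2:ℝ) • y) = y := by
      rw [smul_smul]; norm_num
    have hexp2 : (Complex.I * ((∑ j, ((2:ℝ) • y) j * ξ j : ℝ) : ℂ))
        = 2 * Complex.I * ((∑ j, y j * ξ j : ℝ) : ℂ) := by
      have hsum2 : (∑ j, ((2:ℝ) • y) j * ξ j) = 2 * ∑ j, y j * ξ j := by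
        rw [Finset.mul_sum]
        congr 1
        funext j
        rw [Pi.smul_apply, smul_eq_mul]
        ring
      rw [hsum2]
      push_cast
      ring
    rw [hsm, hexp2, neg_sub]
  have hrhs : (∫ z : RR d, f (-(x - (2:ℝ)⁻¹ • z)) * (starRingEnd ℂ) (g (x + (2:ℝ)⁻¹ • z))
        * Complex.exp (Complex.I * ((∑ j, z j * ξ j : ℝ) : ℂ)))
      = ((2:ℝ) ^ d : ℝ) • ∫ y : RR d, f (y - x) * (starRingEnd ℂ) (g (x + y))
          * Complex.exp (2 * Complex.I * ((∑ j, y j * ξ j : ℝ) : ℂ)) := by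
    have h2d : ((2:ℝ) ^ d) • ((((2:ℝ) ^ d)⁻¹ : ℝ) •
        (∫ z : RR d, f (-(x - (2:ℝ)⁻¹ • z)) * (starRingEnd ℂ) (g (x + (2:ℝ)⁻¹ • z))
          * Complex.exp (Complex.I * ((∑ j, z j * ξ j : ℝ) : ℂ))))
        = ∫ z : RR d, f (-(x - (2:ℝ)⁻¹ • z)) * (starRingEnd ℂ) (g (x + (2:ℝ)⁻¹ • z))
          * Complex.exp (Complex.I * ((∑ j, z j * ξ j : ℝ) : ℂ)) := by
      rw [smul_smul, mul_inv_cancel₀ (by positivity : ((2:ℝ) ^ d) ≠ 0), one_smul]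
    rw [← h2d, ← hcov]
    congr 1
    congr 1
    funext y
    exact hptw2 y
  rw [hrhs]
  -- pull out constants on the left
  have hleft : (∫ y : RR d, Complex.exp (2 * Complex.I * ((∑ j, y j * ξ j : ℝ) : ℂ))
        * ((((2 * Real.pi) ^ (-(d : ℝ)/2) : ℝ) : ℂ) * (((2 * Real.pi) ^ d : ℝ) : ℂ)
            * (f (y - x) * (starRingEnd ℂ) (g (y + x)))))
      = ((((2 * Real.pi) ^ (-(d : ℝ)/2) : ℝ) : ℂ) * (((2 * Real.pi) ^ d : ℝ) : ℂ))
        * ∫ y : RR d, f (y - x) * (starRingEnd ℂ) (g (x + y))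
            * Complex.exp (2 * Complex.I * ((∑ j, y j * ξ j : ℝ) : ℂ)) := by
    rw [← MeasureTheory.integral_const_mul]
    congr 1
    funext y
    have hyx : y + x = x + y := by abel
    rw [hyx]
    ring
  rw [hleft]
  -- final constants
  set J : ℂ := ∫ y : RR d, f (y - x) * (starRingEnd ℂ) (g (x + y))
      * Complex.exp (2 * Complex.I * ((∑ j, y j * ξ j : ℝ) : ℂ)) with hJ
  have hconst : (((Real.pi ^ d : ℝ)⁻¹ : ℝ) : ℂ)
        * ((((2 * Real.pi) ^ (-(d : ℝ)/2) : ℝ) : ℂ) * (((2 * Real.pi) ^ d : ℝ) : ℂ))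
      = (((2 * Real.pi) ^ (-(d : ℝ)/2) : ℝ) : ℂ) * (((2:ℝ) ^ d : ℝ) : ℂ) := by
    rw [← Complex.ofReal_mul, ← Complex.ofReal_mul, ← Complex.ofReal_mul]
    congr 1
    rw [mul_pow]
    have hπ : Real.pi ≠ 0 := Real.pi_ne_zero
    field_simp
  calc (((Real.pi ^ d : ℝ)⁻¹ : ℝ) : ℂ)
        * (((((2 * Real.pi) ^ (-(d : ℝ)/2) : ℝ) : ℂ) * (((2 * Real.pi) ^ d : ℝ) : ℂ)) * J)
      = ((((Real.pi ^ d : ℝ)⁻¹ : ℝ) : ℂ)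
          * ((((2 * Real.pi) ^ (-(d : ℝ)/2) : ℝ) : ℂ) * (((2 * Real.pi) ^ d : ℝ) : ℂ))) * J := by
        ring
  _ = ((((2 * Real.pi) ^ (-(d : ℝ)/2) : ℝ) : ℂ) * (((2:ℝ) ^ d : ℝ) : ℂ)) * J := by
        rw [hconst]
  _ = (((2 * Real.pi) ^ (-(d : ℝ)/2) : ℝ) : ℂ) * (((2:ℝ) ^ d : ℝ) • J) := by
        rw [Complex.real_smul]
        ring

end
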